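/- Let G be a finite group having property (I_p) with respect to a subgroup H. If S is a simple kG-module whose subspace of H-fixed points S^H is nonzero, then S is isomorphic to the trivial kG-module k. -/

import Mathlib

/-- A module is indecomposable if it is nonzero and admits no nontrivial direct sum
decomposition. -/
def IsIndecomposableModule (R M : Type*) [Ring R] [AddCommMonoid M] [Module R M] : Prop :=
  Nontrivial M ∧ ∀ N N' : Submodule R M, IsCompl N N' → N = ⊥ ∨ N' = ⊥

/-- The permutation module `k[G/H]`, as a module over the group algebra `k[G]`. -/
abbrev PermMod (k : Type*) [Field k] {G : Type*} [Group G] (H : Subgroup G) :=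
  (Representation.ofMulAction k G (G ⧸ H)).asModule

/-- A finite group `G` has property `(I_p)` with respect to a subgroup `H` if `H` is a
`p'`-subgroup and the permutation module `k[G/H]` is indecomposable (equivalently, it is the
projective cover of the trivial `k[G]`-module). -/
def HasIp (k : Type*) [Field k] {G : Type*} [Group G] (p : ℕ) (H : Subgroup G) : Prop :=
  ¬ (p ∣ Nat.card H) ∧ IsIndecomposableModule (MonoidAlgebra k G) (PermMod k H)

open MonoidAlgebra Representation

section AuxGeneral

variable {k : Type} [Field k] {G : Type} [Group G]
variable {V : Type} [AddCommGroup V] [Module k V]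

lemma StmtAux.algebraMap_smul' (ρ : Representation k G V) (c : k) (x : ρ.asModule) :
    (algebraMap k (MonoidAlgebra k G) c) • x = c • x := by
  apply ρ.asModuleEquiv.injective
  rw [Representation.asModuleEquiv_map_smul, AlgHom.commutes]
  exact Module.algebraMap_end_apply k k _ c (ρ.asModuleEquiv x)

instance {ρ : Representation k G V} : IsScalarTower k (MonoidAlgebra k G) ρ.asModule :=
  ⟨fun c a x => by rw [Algebra.smul_def, mul_smul, StmtAux.algebraMap_smul' ρ]⟩

lemma StmtAux.asModuleEquiv_smul (ρ : Representation k G V) (c : k) (x : ρ.asModule) :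
    ρ.asModuleEquiv (c • x) = c • ρ.asModuleEquiv x := rfl

lemma StmtAux.isUnit_or_isUnit {R M : Type*} [Ring R] [AddCommGroup M] [Module R M]
    [IsArtinian R M] [IsNoetherian R M]
    (hind : ∀ N N' : Submodule R M, IsCompl N N' → N = ⊥ ∨ N' = ⊥)
    (f g : Module.End R M) (hfg : f + g = 1) : IsUnit f ∨ IsUnit g := by
  obtain ⟨n, hn, hn1⟩ :=
    ((f.eventually_isCompl_ker_pow_range_pow).and (Filter.eventually_ge_atTop 1)).exists
  rcases hind _ _ hn with hker | hrange
  · left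
    rw [Module.End.isUnit_iff]
    obtain ⟨m, rfl⟩ : ∃ m, n = m + 1 := ⟨n - 1, by omega⟩
    constructor
    · rw [← LinearMap.ker_eq_bot]
      refine le_bot_iff.mp ?_
      rw [← hker]
      intro x hx
      rw [LinearMap.mem_ker] at hx ⊢
      rw [pow_succ, Module.End.mul_apply, hx, map_zero]
    · rw [← LinearMap.range_eq_top]
      have htop : LinearMap.range (f ^ (m + 1)) = ⊤ := by
        have h2 := hn.sup_eq_top
        rwa [hker, bot_sup_eq] at h2
      refine top_le_iff.mp ?_
      rw [← htop, pow_succ', Module.End.mul_eq_comp]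
      exact LinearMap.range_comp_le_range _ _
  · right
    have hnil : IsNilpotent f := ⟨n, by rwa [← LinearMap.range_eq_bot]⟩
    have hg : g = 1 - f := by rw [← hfg]; abel
    rw [hg]
    exact hnil.isUnit_one_sub

end AuxGeneral

set_option maxHeartbeats 1600000 in
/-- If `G` has property `(I_p)` with respect to `H` and `S` is a simple `k[G]`-module with a
nonzero `H`-fixed point, then `S` is the trivial module. -/
theorem stmt5 (k : Type) [Field k] (p : ℕ) [Fact p.Prime] [IsAlgClosed k] [CharP k p]
    (G : Type) [Group G] [Finite G] (H : Subgroup G) (hG : HasIp k p H)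
    (S : Type) [AddCommGroup S] [Module (MonoidAlgebra k G) S]
    [IsSimpleModule (MonoidAlgebra k G) S]
    (hfix : ∃ s : S, s ≠ 0 ∧ ∀ h : G, h ∈ H → (MonoidAlgebra.of k G h) • s = s) :
    Nonempty (S ≃ₗ[MonoidAlgebra k G] (Representation.trivial k (G := G) (V := k)).asModule) := by
  classical
  obtain ⟨s, hs0, hsfix⟩ := hfix
  letI : Fintype G := Fintype.ofFinite G
  letI : Fintype H := Fintype.ofFinite H
  letI : Fintype (G ⧸ H) := Fintype.ofFinite _
  set A := MonoidAlgebra k G with hA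
  -- the averaging idempotent
  have hcard : (Nat.card H : k) ≠ 0 := fun h => hG.1 ((CharP.cast_eq_zero_iff k p _).mp h)
  set cH : k := (Nat.card H : k)⁻¹ with hcH
  set σ : A := ∑ h : H, MonoidAlgebra.of k G (h : G) with hσ
  set e : A := cH • σ with he
  have hofσ : ∀ h ∈ H, MonoidAlgebra.of k G h * σ = σ := by
    intro h hh
    rw [hσ, Finset.mul_sum]
    exact Fintype.sum_equiv (Equiv.mulLeft (⟨h, hh⟩ : H))
      (fun h' => MonoidAlgebra.of k G h * MonoidAlgebra.of k G (h' : G))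
      (fun h' => MonoidAlgebra.of k G (h' : G))
      (fun h' => by
        show (of k G) h * (of k G) (h' : G) = (of k G) ((h : G) * (h' : G))
        rw [map_mul])
  have hofe : ∀ h ∈ H, MonoidAlgebra.of k G h * e = e := fun h hh => by
    rw [he, mul_smul_comm, hofσ h hh]
  -- the averaging idempotent fixes any H-fixed vector
  have hesmul : ∀ (W : Type) [AddCommGroup W] [Module A W], ∀ v : W,
      (∀ h ∈ H, MonoidAlgebra.of k G h • v = v) → e • v = v := by
    intro W _ _ v hv
    have hcard' : (Fintype.card H : k) ≠ 0 := by
      rwa [Nat.card_eq_fintype_card] at hcard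
    have h2 : ∀ h : H, (of k G) (h : G) • v = v := fun h => hv h h.2
    have h1 : σ • v = (Fintype.card H : A) • v := by
      rw [hσ, Finset.sum_smul]
      simp only [h2]
      rw [Finset.sum_const, Finset.card_univ, ← Nat.cast_smul_eq_nsmul A]
    rw [he, Algebra.smul_def, mul_smul, h1, ← mul_smul,
      ← map_natCast (algebraMap k A) (Fintype.card H), ← map_mul, hcH,
      Nat.card_eq_fintype_card, inv_mul_cancel₀ hcard', map_one, one_smul]
  have he_idem : e * e = e := by
    have := hesmul A e (fun h hh => by rw [smul_eq_mul]; exact hofe h hh)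
    rwa [smul_eq_mul] at this
  have hes : e • s = s := hesmul S s hsfix
  -- the trivial module
  set T := (Representation.trivial k (G := G) (V := k)).asModule with hT
  set eT := (Representation.trivial k (G := G) (V := k)).asModuleEquiv with heT
  set t₀ : T := eT.symm 1 with ht₀
  have hoft : ∀ g : G, MonoidAlgebra.of k G g • t₀ = t₀ := by
    intro g
    apply eT.injective
    rw [heT, Representation.asModuleEquiv_map_smul, Representation.asAlgebraHom_of]
    rfl
  have het : e • t₀ = t₀ := hesmul T t₀ (fun h _ => hoft h)
  have ht0 : t₀ ≠ 0 := by
    intro h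
    have h2 := congrArg eT h
    rw [ht₀, LinearEquiv.apply_symm_apply, map_zero] at h2
    exact one_ne_zero h2
  -- the permutation module
  set P := PermMod k H with hP
  set ρP := Representation.ofMulAction k G (G ⧸ H) with hρP
  set eP := ρP.asModuleEquiv with heP
  set x₀ : P := eP.symm (MonoidAlgebra.single (QuotientGroup.mk (1 : G)) 1) with hx₀
  have hofx : ∀ (g : G), MonoidAlgebra.of k G g • x₀ =
      eP.symm (MonoidAlgebra.single (QuotientGroup.mk g) 1) := by
    intro g
    apply eP.injective
    rw [heP, Representation.asModuleEquiv_map_smul, Representation.asAlgebraHom_of]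
    simp only [hx₀, heP, LinearEquiv.apply_symm_apply]
    rw [hρP, Representation.ofMulAction_single]
    congr 1
    rw [MulAction.Quotient.smul_mk]
    simp
  have hxfix : ∀ h ∈ H, MonoidAlgebra.of k G h • x₀ = x₀ := by
    intro h hh
    rw [hofx h, hx₀]
    congr 2
    exact (QuotientGroup.eq).mpr (by simpa using inv_mem hh)
  have hex : e • x₀ = x₀ := hesmul P x₀ hxfix
  -- the maps and the module M = Ae
  set φ := LinearMap.toSpanSingleton A S s with hφ
  set τ := LinearMap.toSpanSingleton A T t₀ with hτ
  set ψ := LinearMap.toSpanSingleton A P x₀ with hψ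
  set M : Submodule A A := LinearMap.range (LinearMap.toSpanSingleton A A e) with hM
  have hMdef : ∀ a : A, a ∈ M ↔ ∃ b : A, b * e = a := by
    intro a
    simp only [hM, LinearMap.mem_range, LinearMap.toSpanSingleton_apply, smul_eq_mul]
  have heM : e ∈ M := (hMdef e).mpr ⟨1, one_mul e⟩
  have hMe : ∀ a ∈ M, a * e = a := by
    intro a ha
    obtain ⟨b, rfl⟩ := (hMdef a).mp ha
    rw [mul_assoc, he_idem]
  have hMmul : ∀ (b a : A), a ∈ M → b * a ∈ M := by
    intro b a ha
    obtain ⟨c, rfl⟩ := (hMdef a).mp ha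
    exact (hMdef _).mpr ⟨b * c, mul_assoc b c e⟩
  set φ' : M →ₗ[A] S := φ.comp M.subtype with hφ'
  set τ' : M →ₗ[A] T := τ.comp M.subtype with hτ'
  have hφe : φ' ⟨e, heM⟩ = s := hes
  have hτe : τ' ⟨e, heM⟩ = t₀ := het
  have hφsur : Function.Surjective φ' := by
    have hne : LinearMap.range φ' ≠ ⊥ := by
      intro hbot
      have h2 : φ' ⟨e, heM⟩ ∈ LinearMap.range φ' := ⟨_, rfl⟩
      rw [hbot, Submodule.mem_bot, hφe] at h2
      exact hs0 h2
    rcases eq_bot_or_eq_top (LinearMap.range φ') with h | h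
    · exact absurd h hne
    · exact LinearMap.range_eq_top.mp h
  have hτsur : Function.Surjective τ' := by
    intro v
    refine ⟨⟨algebraMap k A (eT v) * e, (hMdef _).mpr ⟨algebraMap k A (eT v), rfl⟩⟩, ?_⟩
    show (algebraMap k A (eT v) * e) • t₀ = v
    rw [mul_smul, het, StmtAux.algebraMap_smul']
    apply eT.injective
    rw [heT, StmtAux.asModuleEquiv_smul, ← heT, ht₀, LinearEquiv.apply_symm_apply,
      smul_eq_mul, mul_one]
  have hTnt : Nontrivial T := ⟨t₀, 0, ht0⟩
  have hTsimple : IsSimpleModule A T := by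
    letI := hTnt
    letI : Nontrivial (Submodule A T) := ⟨⊥, ⊤, bot_ne_top⟩
    refine { toIsSimpleOrder := ⟨fun N => ?_⟩ }
    rcases eq_or_ne N ⊥ with hbot | hbot
    · exact Or.inl hbot
    · right
      obtain ⟨v, hvN, hv0⟩ := Submodule.ne_bot_iff N |>.mp hbot
      rw [Submodule.eq_top_iff']
      intro w
      have hveq : eT v ≠ 0 := by
        intro hc
        exact hv0 (eT.injective (by rw [hc, map_zero]))
      have hw : w = algebraMap k A ((eT w) * (eT v)⁻¹) • v := by
        apply eT.injective
        rw [StmtAux.algebraMap_smul', heT, StmtAux.asModuleEquiv_smul, ← heT, smul_eq_mul,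
          mul_assoc, inv_mul_cancel₀ hveq, mul_one]
      rw [hw]
      exact N.smul_mem _ hvN
  -- θ : M → P and its bijectivity
  set θ : ↥M →ₗ[A] P := ψ.comp M.subtype with hθ
  have hψrange : ∀ v : P, v ∈ LinearMap.range ψ := by
    have hsingle : ∀ (z : G ⧸ H) (c : k), eP.symm (MonoidAlgebra.single z c) ∈ LinearMap.range ψ := by
      intro z c
      obtain ⟨g, rfl⟩ := QuotientGroup.mk_surjective z
      refine ⟨algebraMap k A c * MonoidAlgebra.of k G g, ?_⟩
      show (algebraMap k A c * MonoidAlgebra.of k G g) • x₀ = _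
      rw [mul_smul, hofx g, StmtAux.algebraMap_smul']
      apply eP.injective
      rw [heP, StmtAux.asModuleEquiv_smul, ← heP]
      simp only [LinearEquiv.apply_symm_apply]
      rw [MonoidAlgebra.smul_single, smul_eq_mul, mul_one]
    intro v
    have hall : ∀ w : MonoidAlgebra k (G ⧸ H), eP.symm w ∈ LinearMap.range ψ := by
      intro w
      induction w using MonoidAlgebra.induction_linear with
      | zero => rw [map_zero]; exact Submodule.zero_mem _
      | add f g hf hg => rw [map_add]; exact Submodule.add_mem _ hf hg
      | single z c => exact hsingle z c
    have h2 := hall (eP v)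
    rwa [LinearEquiv.symm_apply_apply] at h2
  have hθsur : Function.Surjective θ := by
    intro v
    obtain ⟨b, hb⟩ := hψrange v
    refine ⟨⟨b * e, (hMdef _).mpr ⟨b, rfl⟩⟩, ?_⟩
    show (b * e) • x₀ = v
    rw [mul_smul, hex]
    exact hb
  -- finite dimensionality and dimension count
  let lP : P ≃ₗ[k] ((G ⧸ H) →₀ k) := eP.trans (MonoidAlgebra.coeffLinearEquiv k)
  haveI : Module.Finite k ((G ⧸ H) →₀ k) :=
    Module.Finite.equiv (Finsupp.linearEquivFunOnFinite k k (G ⧸ H)).symm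
  haveI hPfin : Module.Finite k P := Module.Finite.equiv lP.symm
  have hfrP : Module.finrank k P = Fintype.card (G ⧸ H) := by
    rw [lP.finrank_eq, Module.finrank_finsupp_self]
  haveI : Module.Finite k A :=
    Module.Finite.equiv ((MonoidAlgebra.coeffLinearEquiv k).trans (Finsupp.linearEquivFunOnFinite k k G)).symm
  let q : G ⧸ H → A := Quotient.lift (fun g : G => MonoidAlgebra.of k G g * e) (by
    intro a b hab
    have hab' : a⁻¹ * b ∈ H := QuotientGroup.leftRel_apply.mp hab
    have hb : MonoidAlgebra.of k G b
        = MonoidAlgebra.of k G a * MonoidAlgebra.of k G (a⁻¹ * b) := by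
      rw [← map_mul, mul_inv_cancel_left]
    simp only [hb, mul_assoc, hofe _ hab'])
  have hspan : ∀ b : A, b * e ∈ Submodule.span k (Set.range q) := by
    intro b
    induction b using MonoidAlgebra.induction_on with
    | of g' =>
      exact Submodule.subset_span ⟨QuotientGroup.mk g', rfl⟩
    | add f g hf hg => rw [add_mul]; exact Submodule.add_mem _ hf hg
    | smul c f hf => rw [smul_mul_assoc]; exact Submodule.smul_mem _ _ hf
  let resE : ↥(M.restrictScalars k) ≃ₗ[k] ↥M :=
    { toFun := fun x => ⟨x.1, x.2⟩
      invFun := fun x => ⟨x.1, x.2⟩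
      map_add' := fun _ _ => rfl
      map_smul' := fun _ _ => rfl
      left_inv := fun _ => rfl
      right_inv := fun _ => rfl }
  haveI hMfin : Module.Finite k ↥M := Module.Finite.equiv resE
  have hfrM : Module.finrank k ↥M ≤ Fintype.card (G ⧸ H) := by
    rw [← resE.finrank_eq]
    have h1 : M.restrictScalars k ≤ Submodule.span k (Set.range q) := by
      intro a ha
      obtain ⟨b, rfl⟩ := (hMdef a).mp ha
      exact hspan b
    calc Module.finrank k (M.restrictScalars k)
        ≤ Module.finrank k (Submodule.span k (Set.range q)) := Submodule.finrank_mono h1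
      _ ≤ (Set.range q).toFinset.card := finrank_span_le_card _
      _ ≤ Fintype.card (G ⧸ H) := by rw [Set.toFinset_card]; exact Fintype.card_range_le q
  have hθinj : Function.Injective θ := by
    let θk : ↥M →ₗ[k] P :=
      { toFun := θ
        map_add' := fun a b => map_add θ a b
        map_smul' := fun c m => by
          have h1 : c • m = (algebraMap k A c) • m := (algebraMap_smul A c m).symm
          show θ (c • m) = (RingHom.id k) c • θ m
          rw [h1, θ.map_smul, StmtAux.algebraMap_smul']
          rfl }
    let f2 : ↥M →ₗ[k] ((G ⧸ H) →₀ k) := lP.toLinearMap.comp θk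
    have hsur2 : LinearMap.range f2 = ⊤ := by
      rw [LinearMap.range_eq_top]
      intro w
      obtain ⟨m, hm⟩ := hθsur (lP.symm w)
      exact ⟨m, by show lP (θ m) = w; rw [hm]; exact lP.apply_symm_apply w⟩
    have h2 := LinearMap.finrank_range_add_finrank_ker (K := k) (V := ↥M) f2
    have h2' : Module.finrank k ↥(LinearMap.range f2) = Fintype.card (G ⧸ H) := by
      rw [hsur2, finrank_top, Module.finrank_finsupp_self]
    rw [h2'] at h2
    have h3 : Module.finrank k (LinearMap.ker f2) = 0 := by omega
    have h4 : LinearMap.ker f2 = ⊥ := Submodule.finrank_eq_zero.mp h3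
    have hinj2 : Function.Injective f2 := LinearMap.ker_eq_bot.mp h4
    intro a b hab
    refine hinj2 ?_
    show lP (θ a) = lP (θ b)
    rw [hab]
  let Θ : ↥M ≃ₗ[A] P := LinearEquiv.ofBijective θ ⟨hθinj, hθsur⟩
  -- indecomposability of M
  have hMind : ∀ N N' : Submodule A ↥M, IsCompl N N' → N = ⊥ ∨ N' = ⊥ := by
    intro N N' hc
    let oi := Submodule.orderIsoMapComap Θ
    rcases hG.2.2 (oi N) (oi N') (oi.isCompl hc) with h | h
    · left
      have h2 := congrArg oi.symm h
      rwa [oi.symm_apply_apply, map_bot] at h2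
    · right
      have h2 := congrArg oi.symm h
      rwa [oi.symm_apply_apply, map_bot] at h2
  -- the coatom argument
  have hK1 : IsCoatom (LinearMap.ker φ') := LinearMap.isCoatom_ker_of_surjective hφsur
  have hK2 : IsCoatom (LinearMap.ker τ') := by
    letI := hTsimple
    exact LinearMap.isCoatom_ker_of_surjective hτsur
  by_cases hKK : LinearMap.ker φ' = LinearMap.ker τ'
  · exact ⟨((φ'.quotKerEquivOfSurjective hφsur).symm.trans
      (Submodule.quotEquivOfEq _ _ hKK)).trans (τ'.quotKerEquivOfSurjective hτsur)⟩
  · exfalso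
    have hsup : LinearMap.ker φ' ⊔ LinearMap.ker τ' = ⊤ := by
      have hne : ¬ LinearMap.ker τ' ≤ LinearMap.ker φ' := by
        intro hle
        rcases lt_or_eq_of_le hle with hlt | heq
        · exact hK1.1 (hK2.2 _ hlt)
        · exact hKK heq.symm
      exact hK1.2 _ (left_lt_sup.mpr hne)
    have heE : (⟨e, heM⟩ : ↥M) ∈ LinearMap.ker φ' ⊔ LinearMap.ker τ' := by
      rw [hsup]; trivial
    obtain ⟨x, hx, y, hy, hxy⟩ := Submodule.mem_sup.mp heE
    have hRmem : ∀ (m z : ↥M), (m : A) * (z : A) ∈ M := fun m z => hMmul _ _ z.2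
    let R : ↥M → Module.End A ↥M := fun z =>
      { toFun := fun m => ⟨(m : A) * (z : A), hRmem m z⟩
        map_add' := fun m m' => Subtype.ext (by simp [add_mul])
        map_smul' := fun a m => Subtype.ext (by simp [smul_eq_mul, mul_assoc]) }
    haveI : IsNoetherian A ↥M := isNoetherian_of_tower k inferInstance
    haveI : IsArtinian A ↥M := isArtinian_of_tower k inferInstance
    have hRsum : R x + R y = 1 := by
      apply LinearMap.ext
      intro m
      apply Subtype.ext
      show (m : A) * (x : A) + (m : A) * (y : A) = (m : A)
      rw [← mul_add]
      have hxyc : (x : A) + (y : A) = e := congrArg Subtype.val hxy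
      rw [hxyc]
      exact hMe _ m.2
    rcases StmtAux.isUnit_or_isUnit hMind (R x) (R y) hRsum with hu | hu
    · obtain ⟨u, hu1⟩ := hu.exists_right_inv
      have h5 : (R x) (u ⟨e, heM⟩) = ⟨e, heM⟩ := by
        rw [← Module.End.mul_apply, hu1, Module.End.one_apply]
      have h6 : ((u ⟨e, heM⟩ : ↥M) : A) * (x : A) = e := congrArg Subtype.val h5
      have h7 : φ e = 0 := by
        rw [← h6, ← smul_eq_mul, map_smul]
        have hx0 : φ (x : A) = 0 := hx
        rw [hx0, smul_zero]
      rw [hφ, LinearMap.toSpanSingleton_apply, hes] at h7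
      exact hs0 h7
    · obtain ⟨u, hu1⟩ := hu.exists_right_inv
      have h5 : (R y) (u ⟨e, heM⟩) = ⟨e, heM⟩ := by
        rw [← Module.End.mul_apply, hu1, Module.End.one_apply]
      have h6 : ((u ⟨e, heM⟩ : ↥M) : A) * (y : A) = e := congrArg Subtype.val h5
      have h7 : τ e = 0 := by
        rw [← h6, ← smul_eq_mul, map_smul]
        have hy0 : τ (y : A) = 0 := hy
        rw [hy0, smul_zero]
      rw [hτ, LinearMap.toSpanSingleton_apply, het] at h7
      exact ht0 h7
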